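/- Let Ω = {(x,t_2,t_3) ∈ ℝ³ : 3t_2 − t_3³ ≠ 0} and define q_1 : Ω → ℝ by q_1(x,t_2,t_3) = (t_3^5 + 15 t_3³ t_2 − 30x) / (5(3t_2 − t_3³)). Then q_1 solves the first flow of the nonlocal Harry Dym hierarchy q_{1,t_2} = ½ q_1 q_{1,x} + ½ ∂^{−1}(q_1 q_{1,xx}): there exists a smooth function A : Ω → ℝ with ∂A/∂x = q_1 · ∂²q_1/∂x² such that ∂q_1/∂t_2 = ½ q_1 ∂q_1/∂x + ½ A on Ω. -/

import Mathlib

noncomputable section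

/-- `Ω = {(x,t₂,t₃) : 3t₂ - t₃³ ≠ 0}`. -/
def Ω16 : Set (ℝ × ℝ × ℝ) := {p | 3 * p.2.1 - p.2.2 ^ 3 ≠ 0}

/-- `q₁(x,t₂,t₃) = (t₃⁵ + 15 t₃³ t₂ - 30x) / (5(3t₂ - t₃³))`. -/
def q16 (p : ℝ × ℝ × ℝ) : ℝ :=
  (p.2.2 ^ 5 + 15 * p.2.2 ^ 3 * p.2.1 - 30 * p.1) / (5 * (3 * p.2.1 - p.2.2 ^ 3))

lemma hX (p : ℝ × ℝ × ℝ) : HasFDerivAt (fun p : ℝ × ℝ × ℝ => p.1)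
    (ContinuousLinearMap.fst ℝ ℝ (ℝ × ℝ)) p := hasFDerivAt_fst

lemma hY (p : ℝ × ℝ × ℝ) : HasFDerivAt (fun p : ℝ × ℝ × ℝ => p.2.1)
    ((ContinuousLinearMap.fst ℝ ℝ ℝ).comp (ContinuousLinearMap.snd ℝ ℝ (ℝ × ℝ))) p :=
  hasFDerivAt_fst.comp p hasFDerivAt_snd

lemma hZ (p : ℝ × ℝ × ℝ) : HasFDerivAt (fun p : ℝ × ℝ × ℝ => p.2.2)
    ((ContinuousLinearMap.snd ℝ ℝ ℝ).comp (ContinuousLinearMap.snd ℝ ℝ (ℝ × ℝ))) p :=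
  hasFDerivAt_snd.comp p hasFDerivAt_snd

lemma dq16 (p : ℝ × ℝ × ℝ) (h : 3 * p.2.1 - p.2.2 ^ 3 ≠ 0) (v : ℝ × ℝ × ℝ) :
    fderiv ℝ q16 p v =
      ((5 * p.2.2 ^ 4 * v.2.2 + (15 * p.2.2 ^ 3 * v.2.1 + p.2.1 * (15 * (3 * p.2.2 ^ 2 * v.2.2)))
          - 30 * v.1) * (5 * (3 * p.2.1 - p.2.2 ^ 3))
        - (p.2.2 ^ 5 + 15 * p.2.2 ^ 3 * p.2.1 - 30 * p.1) * (5 * (3 * v.2.1 - 3 * p.2.2 ^ 2 * v.2.2)))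
        / (5 * (3 * p.2.1 - p.2.2 ^ 3)) ^ 2 := by
  have hz5 : HasFDerivAt (fun p : ℝ × ℝ × ℝ => p.2.2 ^ 5) _ p :=
    (hasDerivAt_pow 5 p.2.2).comp_hasFDerivAt (h₂ := fun x : ℝ => x ^ 5) p (hZ p)
  have hz3 : HasFDerivAt (fun p : ℝ × ℝ × ℝ => p.2.2 ^ 3) _ p :=
    (hasDerivAt_pow 3 p.2.2).comp_hasFDerivAt (h₂ := fun x : ℝ => x ^ 3) p (hZ p)
  have hN : HasFDerivAt (fun p : ℝ × ℝ × ℝ => p.2.2 ^ 5 + 15 * p.2.2 ^ 3 * p.2.1 - 30 * p.1) _ p :=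
    (hz5.add ((hz3.const_mul 15).mul (hY p))).sub ((hX p).const_mul 30)
  have hD : HasFDerivAt (fun p : ℝ × ℝ × ℝ => 5 * (3 * p.2.1 - p.2.2 ^ 3)) _ p :=
    (((hY p).const_mul 3).sub hz3).const_mul 5
  have hne : (5 : ℝ) * (3 * p.2.1 - p.2.2 ^ 3) ≠ 0 := by
    simpa using h
  have hinv : HasFDerivAt (fun p : ℝ × ℝ × ℝ => (5 * (3 * p.2.1 - p.2.2 ^ 3))⁻¹) _ p :=
    (hasDerivAt_inv hne).comp_hasFDerivAt p hD
  have H : HasFDerivAt (fun p : ℝ × ℝ × ℝ =>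
      (p.2.2 ^ 5 + 15 * p.2.2 ^ 3 * p.2.1 - 30 * p.1) * (5 * (3 * p.2.1 - p.2.2 ^ 3))⁻¹) _ p :=
    hN.mul hinv
  have hq : q16 = fun p : ℝ × ℝ × ℝ =>
      (p.2.2 ^ 5 + 15 * p.2.2 ^ 3 * p.2.1 - 30 * p.1) * (5 * (3 * p.2.1 - p.2.2 ^ 3))⁻¹ :=
    funext fun p => div_eq_mul_inv _ _
  rw [hq, H.fderiv]
  simp only [ContinuousLinearMap.comp_apply, ContinuousLinearMap.smul_apply,
    ContinuousLinearMap.add_apply, ContinuousLinearMap.sub_apply, ContinuousLinearMap.coe_fst',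
    ContinuousLinearMap.coe_snd', smul_eq_mul, Nat.cast_ofNat]
  field_simp
  ring

lemma dq16x (p : ℝ × ℝ × ℝ) (h : 3 * p.2.1 - p.2.2 ^ 3 ≠ 0) :
    fderiv ℝ q16 p ((1 : ℝ), (0 : ℝ), (0 : ℝ)) = -6 / (3 * p.2.1 - p.2.2 ^ 3) := by
  rw [dq16 p h, div_eq_div_iff (pow_ne_zero 2 (mul_ne_zero (by norm_num) h)) h]
  dsimp only
  ring

lemma fderiv_comp_snd_e1 (f : ℝ × ℝ → ℝ) (p : ℝ × ℝ × ℝ) (hf : DifferentiableAt ℝ f p.2) :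
    fderiv ℝ (fun q : ℝ × ℝ × ℝ => f q.2) p ((1 : ℝ), (0 : ℝ), (0 : ℝ)) = 0 := by
  have H : HasFDerivAt (fun q : ℝ × ℝ × ℝ => f q.2)
      ((fderiv ℝ f p.2).comp (ContinuousLinearMap.snd ℝ ℝ (ℝ × ℝ))) p :=
    hf.hasFDerivAt.comp p hasFDerivAt_snd
  rw [H.fderiv]
  simp
  exact map_zero _

lemma isOpenΩ16 : IsOpen Ω16 := by
  have : Ω16 = (fun p : ℝ × ℝ × ℝ => 3 * p.2.1 - p.2.2 ^ 3) ⁻¹' {0}ᶜ := by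
    ext p; simp [Ω16]
  rw [this]
  exact isOpen_compl_singleton.preimage (by fun_prop)

theorem rational_solution_first_nonlocal_HD_flow :
    ∃ A : ℝ × ℝ × ℝ → ℝ, ContDiffOn ℝ (⊤ : ℕ∞) A Ω16 ∧
      (∀ p ∈ Ω16, fderiv ℝ A p ((1 : ℝ), (0 : ℝ), (0 : ℝ)) =
        q16 p * fderiv ℝ (fun s => fderiv ℝ q16 s ((1 : ℝ), (0 : ℝ), (0 : ℝ))) p
          ((1 : ℝ), (0 : ℝ), (0 : ℝ))) ∧
      (∀ p ∈ Ω16, fderiv ℝ q16 p ((0 : ℝ), (1 : ℝ), (0 : ℝ)) =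
        (1 / 2) * q16 p * fderiv ℝ q16 p ((1 : ℝ), (0 : ℝ), (0 : ℝ)) + (1 / 2) * A p) := by
  refine ⟨fun p => 6 * p.2.2 ^ 3 / (3 * p.2.1 - p.2.2 ^ 3), ?_, ?_, ?_⟩
  · exact ContDiffOn.div
      (contDiff_const.mul ((contDiff_snd.comp contDiff_snd).pow 3)).contDiffOn
      ((contDiff_const.mul (contDiff_fst.comp contDiff_snd)).sub
        ((contDiff_snd.comp contDiff_snd).pow 3)).contDiffOn
      (fun p hp => hp)
  · intro p hp
    have h : 3 * p.2.1 - p.2.2 ^ 3 ≠ 0 := hp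
    have hden : DifferentiableAt ℝ (fun w : ℝ × ℝ => 3 * w.1 - w.2 ^ 3) p.2 := by fun_prop
    have hinv := hden.inv h
    have h1 : fderiv ℝ (fun q : ℝ × ℝ × ℝ => 6 * q.2.2 ^ 3 / (3 * q.2.1 - q.2.2 ^ 3)) p
        ((1 : ℝ), (0 : ℝ), (0 : ℝ)) = 0 := by
      have hrw : (fun q : ℝ × ℝ × ℝ => 6 * q.2.2 ^ 3 / (3 * q.2.1 - q.2.2 ^ 3)) =
          fun q : ℝ × ℝ × ℝ => (fun w : ℝ × ℝ => 6 * w.2 ^ 3 * (3 * w.1 - w.2 ^ 3)⁻¹) q.2 :=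
        funext fun _ => div_eq_mul_inv _ _
      rw [hrw]
      have hnum : DifferentiableAt ℝ (fun w : ℝ × ℝ => 6 * w.2 ^ 3) p.2 := by fun_prop
      exact fderiv_comp_snd_e1 _ p (hnum.mul hinv)
    have heq : (fun s => fderiv ℝ q16 s ((1 : ℝ), (0 : ℝ), (0 : ℝ))) =ᶠ[nhds p]
        (fun s : ℝ × ℝ × ℝ => -6 / (3 * s.2.1 - s.2.2 ^ 3)) :=
      Filter.eventually_of_mem (isOpenΩ16.mem_nhds hp) (fun s hs => dq16x s hs)
    have h2 : fderiv ℝ (fun s => fderiv ℝ q16 s ((1 : ℝ), (0 : ℝ), (0 : ℝ))) p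
        ((1 : ℝ), (0 : ℝ), (0 : ℝ)) = 0 := by
      rw [heq.fderiv_eq]
      have hrw : (fun s : ℝ × ℝ × ℝ => -6 / (3 * s.2.1 - s.2.2 ^ 3)) =
          fun q : ℝ × ℝ × ℝ => (fun w : ℝ × ℝ => -6 * (3 * w.1 - w.2 ^ 3)⁻¹) q.2 :=
        funext fun _ => div_eq_mul_inv _ _
      rw [hrw]
      exact fderiv_comp_snd_e1 _ p ((differentiableAt_const (-6 : ℝ)).mul hinv)
    rw [h1, h2, mul_zero]
  · intro p hp
    have h : 3 * p.2.1 - p.2.2 ^ 3 ≠ 0 := hp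
    rw [dq16 p h, dq16 p h]
    simp only [q16]
    have h' : p.2.1 * 3 - p.2.2 ^ 3 ≠ 0 := by rwa [mul_comm]
    field_simp
    ring
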